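/- In any maximal outerplanar graph on n ≥ 3 vertices, for any vertex v, exactly n - 1 - deg(v) edge flips are necessary and sufficient to make v dominant (adjacent to all other vertices), where a flip replaces an internal edge xy (shared by triangles vxy-like pairs) by the other diagonal of the quadrilateral formed by the two triangles sharing xy. -/

import Mathlib

open Finset

/-- Two chords `ab` and `cd` of the polygon `0, 1, …, n-1` cross. -/
def Crossing {n : ℕ} (a b c d : Fin n) : Prop :=
  (a < c ∧ c < b ∧ b < d) ∨ (c < a ∧ a < d ∧ d < b)

/-- A maximal outerplanar graph, modelled as a triangulated polygon on the vertices
`0, 1, …, n-1` in convex position: all boundary edges are present, no two edges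
cross, and the number of edges is `2n - 3` (edge-maximality). -/
structure MaxOuterplanar (n : ℕ) [NeZero n] where
  graph : SimpleGraph (Fin n)
  boundary : ∀ i : Fin n, graph.Adj i (i + 1)
  noncross : ∀ a b c d : Fin n, graph.Adj a b → graph.Adj c d → ¬ Crossing a b c d
  maximal : graph.edgeSet.ncard = 2 * n - 3

/-- Degree of a vertex. -/
noncomputable def deg {V : Type*} (G : SimpleGraph V) (v : V) : ℕ := (G.neighborSet v).ncard

/-- A vertex adjacent to all other vertices. -/
def Dominant {V : Type*} (G : SimpleGraph V) (v : V) : Prop := ∀ u, u ≠ v → G.Adj v u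

/-- `G'` is obtained from `G` by flipping the edge `xy`, shared by the two triangles
`xyz` and `xyw`, into the other diagonal `zw` of the quadrilateral; the flip is
valid since `zw` is not already an edge. -/
def IsFlipG {V : Type*} (G G' : SimpleGraph V) : Prop :=
  ∃ x y z w : V, G.Adj x y ∧ G.Adj x z ∧ G.Adj y z ∧ G.Adj x w ∧ G.Adj y w ∧
    z ≠ w ∧ ¬ G.Adj z w ∧
    G' = SimpleGraph.fromEdgeSet ((G.edgeSet \ {s(x, y)}) ∪ {s(z, w)})

/-- `G'` is reachable from `G` by a sequence of exactly `k` edge flips. -/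
def ReachableG {V : Type*} (G G' : SimpleGraph V) (k : ℕ) : Prop :=
  ∃ L : List (SimpleGraph V), L.length = k ∧ List.Chain IsFlipG G L ∧ L.getLastD G = G'

def NCross (p q : ℕ × ℕ) : Prop :=
  (p.1 < q.1 ∧ q.1 < p.2 ∧ p.2 < q.2) ∨ (q.1 < p.1 ∧ p.1 < q.2 ∧ q.2 < p.2)

theorem chord_bound : ∀ N : ℕ, ∀ S : Finset ℕ, ∀ C : Finset (ℕ × ℕ),
    S.card ≤ N →
    (∀ p ∈ C, p.1 < p.2 ∧ p.1 ∈ S ∧ p.2 ∈ S) →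
    (∀ p ∈ C, ∀ q ∈ C, ¬ NCross p q) →
    2 ≤ S.card → C.card + 3 ≤ 2 * S.card := by
  intro N
  induction N with
  | zero => intro S C hSN _ _ h2; omega
  | succ N ih =>
    intro S C hSN hmem hnc h2
    classical
    by_cases hA : ∃ p ∈ C, (∃ s ∈ S, p.1 < s ∧ s < p.2) ∧ (∃ t ∈ S, t < p.1 ∨ p.2 < t)
    · obtain ⟨p, hpC, ⟨s, hsS, hs1, hs2⟩, ⟨t, htS, ht⟩⟩ := hA
      obtain ⟨a, b⟩ := p
      simp only at hs1 hs2 ht ⊢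
      have hab : a < b := (hmem _ hpC).1
      have haS : a ∈ S := (hmem _ hpC).2.1
      have hbS : b ∈ S := (hmem _ hpC).2.2
      set S1 := S.filter (fun x => a ≤ x ∧ x ≤ b) with hS1def
      set S2 := S.filter (fun x => x ≤ a ∨ b ≤ x) with hS2def
      set C1 := C.filter (fun q => a ≤ q.1 ∧ q.2 ≤ b) with hC1def
      set C2 := C.filter (fun q => (q.1 ≤ a ∨ b ≤ q.1) ∧ (q.2 ≤ a ∨ b ≤ q.2)) with hC2def
      -- C = C1 ∪ C2
      have hCunion : C ⊆ C1 ∪ C2 := by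
        intro q hqC
        obtain ⟨c, d⟩ := q
        have hcd : c < d := (hmem _ hqC).1
        by_cases hin : (a < c ∧ c < b) ∨ (a < d ∧ d < b)
        · -- an endpoint strictly inside: both endpoints in [a,b]
          have hnc1 := hnc _ hpC _ hqC
          simp only [NCross] at hnc1
          have : a ≤ c ∧ d ≤ b := by
            constructor
            · by_contra hc; push_neg at hc
              rcases hin with ⟨h1, h2⟩ | ⟨h1, h2⟩
              · omega
              · exact hnc1 (Or.inr ⟨by omega, h1, h2⟩)
            · by_contra hd; push_neg at hd
              rcases hin with ⟨h1, h2⟩ | ⟨h1, h2⟩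
              · exact hnc1 (Or.inl ⟨h1, h2, by omega⟩)
              · omega
          exact Finset.mem_union.2 (Or.inl (Finset.mem_filter.2 ⟨hqC, this⟩))
        · push_neg at hin
          refine Finset.mem_union.2 (Or.inr (Finset.mem_filter.2 ⟨hqC, ?_, ?_⟩)) <;> omega
      have hinter : C1 ∩ C2 = {(a, b)} := by
        apply Finset.Subset.antisymm
        · intro q hq
          simp only [Finset.mem_inter, hC1def, hC2def, Finset.mem_filter] at hq
          obtain ⟨⟨hqC, h1, h2⟩, _, h3, h4⟩ := hq
          have hq12 : q.1 < q.2 := (hmem _ hqC).1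
          have : q = (a, b) := by
            obtain ⟨c, d⟩ := q; simp only at *
            simp only [Prod.mk.injEq]; omega
          simp [this]
        · intro q hq
          simp only [Finset.mem_singleton] at hq
          subst hq
          simp only [Finset.mem_inter, hC1def, hC2def, Finset.mem_filter]
          exact ⟨⟨hpC, le_refl _, le_refl _⟩, hpC, Or.inl (le_refl _), Or.inr (le_refl _)⟩
      have hScards : S1.card + S2.card = S.card + 2 := by
        have h1 : S1 ∪ S2 = S := by
          apply Finset.Subset.antisymm
          · intro x hx
            rcases Finset.mem_union.1 hx with h | h <;> exact (Finset.mem_filter.1 h).1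
          · intro x hx
            by_cases hxb : a ≤ x ∧ x ≤ b
            · exact Finset.mem_union.2 (Or.inl (Finset.mem_filter.2 ⟨hx, hxb⟩))
            · refine Finset.mem_union.2 (Or.inr (Finset.mem_filter.2 ⟨hx, ?_⟩)); omega
        have h2' : S1 ∩ S2 = {a, b} := by
          apply Finset.Subset.antisymm
          · intro x hx
            simp only [Finset.mem_inter, hS1def, hS2def, Finset.mem_filter] at hx
            simp only [Finset.mem_insert, Finset.mem_singleton]
            omega
          · intro x hx
            simp only [Finset.mem_insert, Finset.mem_singleton] at hx
            simp only [Finset.mem_inter, hS1def, hS2def, Finset.mem_filter]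
            rcases hx with rfl | rfl
            · exact ⟨⟨haS, le_refl _, le_of_lt hab⟩, haS, Or.inl (le_refl _)⟩
            · exact ⟨⟨hbS, le_of_lt hab, le_refl _⟩, hbS, Or.inr (le_refl _)⟩
        have := Finset.card_union_add_card_inter S1 S2
        rw [h1, h2'] at this
        have hab2 : ({a, b} : Finset ℕ).card = 2 := by
          rw [Finset.card_insert_of_notMem (by simp; omega), Finset.card_singleton]
        omega
      have hS1lt : S1.card < S.card := by
        apply Finset.card_lt_card
        constructor
        · exact Finset.filter_subset _ _
        · intro hsub
          have := hsub htS
          simp only [hS1def, Finset.mem_filter] at this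
          omega
      have hS2lt : S2.card < S.card := by
        apply Finset.card_lt_card
        constructor
        · exact Finset.filter_subset _ _
        · intro hsub
          have := hsub hsS
          simp only [hS2def, Finset.mem_filter] at this
          omega
      have hS1two : 2 ≤ S1.card := by
        have : ({a, b} : Finset ℕ) ⊆ S1 := by
          intro x hx
          simp only [Finset.mem_insert, Finset.mem_singleton] at hx
          simp only [hS1def, Finset.mem_filter]
          rcases hx with rfl | rfl
          · exact ⟨haS, le_refl _, le_of_lt hab⟩
          · exact ⟨hbS, le_of_lt hab, le_refl _⟩
        have h := Finset.card_le_card this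
        have hab2 : ({a, b} : Finset ℕ).card = 2 := by
          rw [Finset.card_insert_of_notMem (by simp; omega), Finset.card_singleton]
        omega
      have hS2two : 2 ≤ S2.card := by
        have : ({a, b} : Finset ℕ) ⊆ S2 := by
          intro x hx
          simp only [Finset.mem_insert, Finset.mem_singleton] at hx
          simp only [hS2def, Finset.mem_filter]
          rcases hx with rfl | rfl
          · exact ⟨haS, Or.inl (le_refl _)⟩
          · exact ⟨hbS, Or.inr (le_refl _)⟩
        have h := Finset.card_le_card this
        have hab2 : ({a, b} : Finset ℕ).card = 2 := by
          rw [Finset.card_insert_of_notMem (by simp; omega), Finset.card_singleton]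
        omega
      have ih1 : C1.card + 3 ≤ 2 * S1.card := by
        apply ih S1 C1 (by omega)
        · intro q hq
          have hqC := (Finset.mem_filter.1 hq).1
          have hf := (Finset.mem_filter.1 hq).2
          have := hmem _ hqC
          refine ⟨this.1, ?_, ?_⟩ <;>
            simp only [hS1def, Finset.mem_filter] <;>
            exact ⟨by tauto, by omega⟩
        · intro q hq r hr
          exact hnc _ (Finset.mem_filter.1 hq).1 _ (Finset.mem_filter.1 hr).1
        · exact hS1two
      have ih2 : C2.card + 3 ≤ 2 * S2.card := by
        apply ih S2 C2 (by omega)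
        · intro q hq
          have hqC := (Finset.mem_filter.1 hq).1
          have hf := (Finset.mem_filter.1 hq).2
          have := hmem _ hqC
          refine ⟨this.1, ?_, ?_⟩ <;>
            simp only [hS2def, Finset.mem_filter] <;>
            exact ⟨by tauto, by tauto⟩
        · intro q hq r hr
          exact hnc _ (Finset.mem_filter.1 hq).1 _ (Finset.mem_filter.1 hr).1
        · exact hS2two
      have hCcard : C.card ≤ C1.card + C2.card - 1 := by
        have h1 := Finset.card_le_card hCunion
        have h2 := Finset.card_union_add_card_inter C1 C2
        rw [hinter] at h2
        simp at h2
        omega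
      omega
    · -- case B
      push_neg at hA
      by_cases h3 : 3 ≤ S.card
      · -- injection into S
        have hSne : S.Nonempty := Finset.card_pos.1 (by omega)
        set f : ℕ × ℕ → ℕ := fun p => if ∃ s ∈ S, p.1 < s ∧ s < p.2 then S.max' hSne else p.1 with hf
        have hmax : S.max' hSne ∈ S := S.max'_mem hSne
        have hinj : Set.InjOn f C := by
          intro p hp q hq hfpq
          have hpC := hp; have hqC := hq
          simp only [Finset.mem_coe] at hpC hqC
          have hpm := hmem _ hpC; have hqm := hmem _ hqC
          by_cases hpin : ∃ s ∈ S, p.1 < s ∧ s < p.2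
          · have hpspan := hA _ hpC hpin
            by_cases hqin : ∃ s ∈ S, q.1 < s ∧ s < q.2
            · have hqspan := hA _ hqC hqin
              -- both spanning: p = q = (min, max)
              have hp1 : ∀ x ∈ S, p.1 ≤ x ∧ x ≤ p.2 := by
                intro x hx; have := hpspan x hx; omega
              have hq1 : ∀ x ∈ S, q.1 ≤ x ∧ x ≤ q.2 := by
                intro x hx; have := hqspan x hx; omega
              have e1 : p.1 = q.1 :=
                le_antisymm (hp1 _ hqm.2.1).1 (hq1 _ hpm.2.1).1
              have e2 : p.2 = q.2 :=
                le_antisymm (hq1 _ hpm.2.2).2 (hp1 _ hqm.2.2).2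
              exact Prod.ext e1 e2
            · -- p spanning, q consecutive: f p = max, f q = q.1 < q.2 ≤ max
              exfalso
              simp only [hf, if_pos hpin, if_neg hqin] at hfpq
              have := Finset.le_max' S q.2 hqm.2.2
              omega
          · by_cases hqin : ∃ s ∈ S, q.1 < s ∧ s < q.2
            · exfalso
              simp only [hf, if_pos hqin, if_neg hpin] at hfpq
              have := Finset.le_max' S p.2 hpm.2.2
              omega
            · -- both consecutive
              simp only [hf, if_neg hpin, if_neg hqin] at hfpq
              push_neg at hpin hqin
              have e2 : p.2 = q.2 := by
                rcases Nat.lt_trichotomy p.2 q.2 with h | h | h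
                · have := hqin p.2 hpm.2.2 (by omega); omega
                · exact h
                · have := hpin q.2 hqm.2.2 (by omega); omega
              exact Prod.ext hfpq e2
        have hmapsto : ∀ p ∈ C, f p ∈ S := by
          intro p hp
          by_cases hpin : ∃ s ∈ S, p.1 < s ∧ s < p.2
          · simp only [hf, if_pos hpin]; exact hmax
          · simp only [hf, if_neg hpin]; exact (hmem _ hp).2.1
        have := Finset.card_le_card_of_injOn f hmapsto hinj
        omega
      · -- |S| = 2
        have hS2 : S.card = 2 := by omega
        obtain ⟨x, y, hxy, hSxy⟩ := Finset.card_eq_two.1 hS2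
        have : C ⊆ {(min x y, max x y)} := by
          intro p hp
          have := hmem _ hp
          rw [hSxy] at this
          simp only [Finset.mem_insert, Finset.mem_singleton] at this
          obtain ⟨h1, h2, h3⟩ := this
          simp only [Finset.mem_singleton]
          obtain ⟨c, d⟩ := p
          simp only at *
          rcases h2 with rfl | rfl <;> rcases h3 with rfl | rfl <;>
            (simp only [Prod.mk.injEq]; omega)
        have := Finset.card_le_card this
        rw [Finset.card_singleton] at this
        omega


/-- Edge bound for noncrossing graphs on `Fin n`. -/
theorem edge_bound {n : ℕ} (G : SimpleGraph (Fin n))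
    (hnc : ∀ a b c d : Fin n, G.Adj a b → G.Adj c d → ¬ Crossing a b c d)
    (h2 : 2 ≤ n) : G.edgeSet.ncard + 3 ≤ 2 * n := by
  classical
  set D : Finset (Fin n × Fin n) :=
    Finset.univ.filter (fun p => p.1 < p.2 ∧ G.Adj p.1 p.2) with hD
  -- edgeSet is the image of D under the quotient map
  have him : G.edgeSet = (fun p : Fin n × Fin n => s(p.1, p.2)) '' ↑D := by
    ext e
    refine e.ind (fun x y => ?_)
    simp only [SimpleGraph.mem_edgeSet, Set.mem_image, Finset.mem_coe, hD,
      Finset.mem_filter, Finset.mem_univ, true_and]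
    constructor
    · intro h
      rcases lt_trichotomy x y with hxy | hxy | hxy
      · exact ⟨(x, y), ⟨hxy, h⟩, rfl⟩
      · exact absurd hxy (G.ne_of_adj h)
      · exact ⟨(y, x), ⟨hxy, h.symm⟩, Sym2.eq_swap⟩
    · rintro ⟨⟨c, d⟩, ⟨hlt, hadj⟩, he⟩
      rw [Sym2.eq_iff] at he
      rcases he with ⟨rfl, rfl⟩ | ⟨rfl, rfl⟩
      · exact hadj
      · exact hadj.symm
  have hinjD : Set.InjOn (fun p : Fin n × Fin n => s(p.1, p.2)) ↑D := by
    rintro ⟨x, y⟩ hx ⟨z, w⟩ hz h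
    simp only [Finset.mem_coe, hD, Finset.mem_filter] at hx hz
    rw [Sym2.eq_iff] at h
    rcases h with ⟨rfl, rfl⟩ | ⟨rfl, rfl⟩
    · rfl
    · exact absurd hz.2.1 (asymm hx.2.1)
  have hcard1 : G.edgeSet.ncard = D.card := by
    rw [him, Set.ncard_image_of_injOn hinjD, Set.ncard_coe_finset]
  set C : Finset (ℕ × ℕ) := D.image (fun p => (p.1.1, p.2.1)) with hC
  have hinjC : Set.InjOn (fun p : Fin n × Fin n => ((p.1.1 : ℕ), (p.2.1 : ℕ))) ↑D := by
    rintro ⟨x, y⟩ _ ⟨z, w⟩ _ h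
    simp only [Prod.mk.injEq] at h
    simp only [Prod.mk.injEq]
    exact ⟨Fin.val_injective h.1, Fin.val_injective h.2⟩
  have hcard2 : C.card = D.card := Finset.card_image_of_injOn hinjC
  have := chord_bound n (Finset.range n) C (by simp)
    (by
      intro p hp
      simp only [hC, Finset.mem_image] at hp
      obtain ⟨⟨x, y⟩, hxy, rfl⟩ := hp
      simp only [hD, Finset.mem_filter] at hxy
      exact ⟨hxy.2.1, by simp [x.2], by simp [y.2]⟩)
    (by
      intro p hp q hq hcr
      simp only [hC, Finset.mem_image] at hp hq
      obtain ⟨⟨x, y⟩, hxy, rfl⟩ := hp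
      obtain ⟨⟨z, w⟩, hzw, rfl⟩ := hq
      simp only [hD, Finset.mem_filter] at hxy hzw
      apply hnc x y z w hxy.2.2 hzw.2.2
      rcases hcr with ⟨h1, h2, h3⟩ | ⟨h1, h2, h3⟩
      · exact Or.inl ⟨h1, h2, h3⟩
      · exact Or.inr ⟨h1, h2, h3⟩)
    (by simpa using h2)
  rw [Finset.card_range] at this
  omega

/-- crossing is impossible for chords sharing both endpoints. -/
lemma crossing_self {n : ℕ} (x y : Fin n) : ¬ Crossing x y x y ∧ ¬ Crossing x y y x := by
  constructor <;> rintro (⟨h1, h2, h3⟩ | ⟨h1, h2, h3⟩) <;>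
    simp only [Fin.lt_def] at * <;> omega

/-- Saturation: any chord crossing no edge of a maximal outerplanar graph is an edge. -/
lemma saturated {n : ℕ} [NeZero n] (hn : 3 ≤ n) (T : MaxOuterplanar n) (a b : Fin n)
    (hab : a ≠ b)
    (h : ∀ c d : Fin n, T.graph.Adj c d →
      ¬ Crossing a b c d ∧ ¬ Crossing b a c d ∧ ¬ Crossing c d a b ∧ ¬ Crossing c d b a) :
    T.graph.Adj a b := by
  by_contra hne
  set G2 := SimpleGraph.fromEdgeSet (insert s(a, b) T.graph.edgeSet) with hG2
  have hadj2 : ∀ x y : Fin n, G2.Adj x y ↔ (s(x, y) = s(a, b) ∨ T.graph.Adj x y) ∧ x ≠ y := by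
    intro x y
    rw [hG2, SimpleGraph.fromEdgeSet_adj, Set.mem_insert_iff, SimpleGraph.mem_edgeSet]
  have hnc2 : ∀ x y z w : Fin n, G2.Adj x y → G2.Adj z w → ¬ Crossing x y z w := by
    intro x y z w hxy hzw
    rw [hadj2] at hxy hzw
    rcases hxy.1 with h1 | h1 <;> rcases hzw.1 with h2 | h2
    · rw [Sym2.eq_iff] at h1 h2
      rcases h1 with ⟨rfl, rfl⟩ | ⟨rfl, rfl⟩ <;> rcases h2 with ⟨rfl, rfl⟩ | ⟨rfl, rfl⟩ <;>
        first
          | exact (crossing_self _ _).1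
          | exact (crossing_self _ _).2
          | · intro hcr
              rcases hcr with ⟨u1, u2, u3⟩ | ⟨u1, u2, u3⟩ <;>
                (simp only [Fin.lt_def] at *; omega)
    · rw [Sym2.eq_iff] at h1
      rcases h1 with ⟨rfl, rfl⟩ | ⟨rfl, rfl⟩
      · exact (h z w h2).1
      · exact (h z w h2).2.1
    · rw [Sym2.eq_iff] at h2
      rcases h2 with ⟨rfl, rfl⟩ | ⟨rfl, rfl⟩
      · exact (h x y h1).2.2.1
      · exact (h x y h1).2.2.2
    · exact T.noncross x y z w h1 h2
  have hedge2 : G2.edgeSet = insert s(a, b) T.graph.edgeSet := by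
    rw [hG2, SimpleGraph.edgeSet_fromEdgeSet]
    ext e
    simp only [Set.mem_diff, Set.mem_insert_iff, Set.mem_setOf_eq]
    constructor
    · tauto
    · intro he
      refine ⟨he, ?_⟩
      rcases he with rfl | he
      · simp [Sym2.isDiag_iff_proj_eq, hab]
      · exact SimpleGraph.not_isDiag_of_mem_edgeSet _ he
  have hcount : G2.edgeSet.ncard = 2 * n - 2 := by
    rw [hedge2, Set.ncard_insert_of_notMem (by rwa [SimpleGraph.mem_edgeSet])
      (Set.toFinite _), T.maximal]
    omega
  have := edge_bound G2 hnc2 (by omega)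
  omega

lemma fin_pos_iff_ne_zero' {n : ℕ} [NeZero n] (a : Fin n) : 0 < a ↔ a ≠ 0 := by
  constructor
  · intro h he; subst he; exact lt_irrefl _ h
  · intro h
    rcases Nat.eq_zero_or_pos a.val with h0 | h0
    · exact absurd (Fin.ext (by simp [h0])) h
    · exact Fin.lt_def.2 (by simpa using h0)

lemma dominant_of_deg {n : ℕ} [NeZero n] (G : SimpleGraph (Fin n)) (v : Fin n)
    (h : n - 1 ≤ deg G v) : Dominant G v := by
  have hsub : G.neighborSet v ⊆ Set.univ \ {v} := by
    intro u hu
    exact ⟨Set.mem_univ _, by simpa using (G.ne_of_adj hu).symm⟩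
  have hcard : (Set.univ \ {v} : Set (Fin n)).ncard = n - 1 := by
    rw [Set.ncard_diff_singleton_of_mem (Set.mem_univ v), Set.ncard_univ]
    simp
  have heq : G.neighborSet v = Set.univ \ {v} :=
    Set.eq_of_subset_of_ncard_le hsub (by rw [hcard]; exact h) (Set.toFinite _)
  intro u hu
  have : u ∈ G.neighborSet v := heq ▸ ⟨Set.mem_univ _, by simpa using hu⟩
  exact this

lemma deg_dominant {n : ℕ} [NeZero n] (G : SimpleGraph (Fin n)) (v : Fin n)
    (h : Dominant G v) : deg G v = n - 1 := by
  have heq : G.neighborSet v = Set.univ \ {v} := by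
    ext u
    simp only [SimpleGraph.mem_neighborSet, Set.mem_diff, Set.mem_univ, true_and,
      Set.mem_singleton_iff]
    exact ⟨fun ha => (G.ne_of_adj ha).symm, fun hu => h u hu⟩
  rw [deg, heq, Set.ncard_diff_singleton_of_mem (Set.mem_univ v),
    Set.ncard_univ]
  simp

/-- The key step: a single flip increasing the degree of vertex 0. -/
lemma flip_step {n : ℕ} [NeZero n] (hn : 3 ≤ n) (T : MaxOuterplanar n)
    (hdeg : deg T.graph 0 < n - 1) :
    ∃ T' : MaxOuterplanar n, IsFlipG T.graph T'.graph ∧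
      deg T'.graph 0 = deg T.graph 0 + 1 := by
  classical
  have hval1 : (1 : Fin n).val = 1 := by
    rw [Fin.val_one']; exact Nat.mod_eq_of_lt (by omega)
  have hvalsucc : ∀ i : Fin n, (i + 1).val = (i.val + 1) % n := by
    intro i; rw [Fin.val_add, hval1]
  -- a non-neighbor of 0 exists
  obtain ⟨u, hu0, huna⟩ : ∃ u : Fin n, u ≠ 0 ∧ ¬T.graph.Adj 0 u := by
    by_contra hcon
    push_neg at hcon
    have := deg_dominant T.graph 0 (fun u hu => hcon u hu)
    omega
  have hadj01 : T.graph.Adj 0 1 := by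
    have := T.boundary 0; rwa [zero_add] at this
  set lst : Fin n := ⟨n - 1, by omega⟩ with hlst
  have hadj0lst : T.graph.Adj 0 lst := by
    have := T.boundary lst
    have he : lst + 1 = 0 := by
      apply Fin.ext
      rw [hvalsucc]
      have hlv : lst.val = n - 1 := rfl
      rw [hlv, Fin.val_zero, Nat.sub_add_cancel (by omega)]
      exact Nat.mod_self n
    rw [he] at this
    exact this.symm
  have hu1 : (1 : Fin n) < u := by
    rw [Fin.lt_def, hval1]
    have h1 : u.val ≠ 0 := fun h => hu0 (Fin.ext (by simpa using h))
    have h2 : u.val ≠ 1 := fun h => huna (by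
      have : u = 1 := Fin.ext (by rw [h, hval1])
      rw [this]; exact hadj01)
    omega
  have hulst : u < lst := by
    rw [Fin.lt_def]
    have h2 : u.val ≠ n - 1 := fun h => huna (by
      have : u = lst := Fin.ext (by rw [h])
      rw [this]; exact hadj0lst)
    have hlv : lst.val = n - 1 := rfl
    have := u.2
    omega
  -- a : the largest neighbor of 0 below u
  set A : Finset (Fin n) := Finset.univ.filter (fun c => c < u ∧ T.graph.Adj 0 c) with hA
  have hAne : A.Nonempty := ⟨1, by simp [hA, hu1, hadj01]⟩
  set a : Fin n := A.max' hAne with ha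
  have haA : a ∈ A := A.max'_mem hAne
  have hau : a < u := by
    have := Finset.mem_filter.1 haA; tauto
  have hadj0a : T.graph.Adj 0 a := by
    have := Finset.mem_filter.1 haA; tauto
  have maxA : ∀ c, c < u → T.graph.Adj 0 c → c ≤ a := by
    intro c h1 h2
    exact A.le_max' c (by simp [hA, h1, h2])
  have ha0 : 0 < a := (fin_pos_iff_ne_zero' a).2 (fun h => by
    rw [h] at hadj0a; exact hadj0a.ne rfl)
  -- b : the smallest neighbor of 0 above u
  set B : Finset (Fin n) := Finset.univ.filter (fun c => u < c ∧ T.graph.Adj 0 c) with hB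
  have hBne : B.Nonempty := ⟨lst, by simp [hB, hulst, hadj0lst]⟩
  set b : Fin n := B.min' hBne with hb
  have hbB : b ∈ B := B.min'_mem hBne
  have hub : u < b := by
    have := Finset.mem_filter.1 hbB; tauto
  have hadj0b : T.graph.Adj 0 b := by
    have := Finset.mem_filter.1 hbB; tauto
  have minB : ∀ c, u < c → T.graph.Adj 0 c → b ≤ c := by
    intro c h1 h2
    exact B.min'_le c (by simp [hB, h1, h2])
  have gap : ∀ c, a < c → c < b → ¬T.graph.Adj 0 c := by
    intro c h1 h2 hadj
    rcases lt_trichotomy c u with h | h | h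
    · exact absurd (maxA c h hadj) (not_le.2 h1)
    · rw [h] at hadj; exact huna hadj
    · exact absurd (minB c h hadj) (not_le.2 h2)
  have hab : a < b := lt_trans hau hub
  have hab2 : a.val + 2 ≤ b.val := by
    have h1 := Fin.lt_def.1 hau
    have h2 := Fin.lt_def.1 hub
    omega
  -- workhorse 1: no edge has an endpoint strictly inside (a, b) and the other outside [a,b]
  have W1 : ∀ c d : Fin n, T.graph.Adj c d → a < c → c < b → (d < a ∨ b < d) → False := by
    intro c d hcd h1 h2 h3
    by_cases hd0 : d = 0
    · rw [hd0] at hcd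
      exact gap c h1 h2 hcd.symm
    · rcases h3 with h3 | h3
      · exact T.noncross 0 a d c hadj0a hcd.symm
          (Or.inl ⟨(fin_pos_iff_ne_zero' d).2 hd0, h3, h1⟩)
      · exact T.noncross 0 b c d hadj0b hcd
          (Or.inl ⟨lt_trans ha0 h1, h2, h3⟩)
  -- the chord ab is an edge
  have hadjab : T.graph.Adj a b := by
    apply saturated hn T a b (Fin.ne_of_lt hab)
    intro c d hcd
    refine ⟨?_, ?_, ?_, ?_⟩
    · rintro (⟨h1, h2, h3⟩ | ⟨h1, h2, h3⟩)
      · exact W1 c d hcd h1 h2 (Or.inr h3)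
      · exact W1 d c hcd.symm h2 h3 (Or.inl h1)
    · rintro (⟨h1, h2, h3⟩ | ⟨h1, h2, h3⟩) <;>
        (simp only [Fin.lt_def] at *; omega)
    · rintro (⟨h1, h2, h3⟩ | ⟨h1, h2, h3⟩)
      · exact W1 d c hcd.symm h2 h3 (Or.inl h1)
      · exact W1 c d hcd h1 h2 (Or.inr h3)
    · rintro (⟨h1, h2, h3⟩ | ⟨h1, h2, h3⟩) <;>
        (simp only [Fin.lt_def] at *; omega)
  -- w : the largest neighbor of a strictly inside (a, b)
  set W : Finset (Fin n) := Finset.univ.filter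
    (fun c => a < c ∧ c < b ∧ T.graph.Adj a c) with hW
  have hWne : W.Nonempty := by
    refine ⟨a + 1, ?_⟩
    have hvala1 : (a + 1).val = a.val + 1 := by
      rw [hvalsucc]
      have := b.2
      exact Nat.mod_eq_of_lt (by omega)
    simp only [hW, Finset.mem_filter, Finset.mem_univ, true_and]
    refine ⟨Fin.lt_def.2 (by omega), Fin.lt_def.2 (by omega), T.boundary a⟩
  set w : Fin n := W.max' hWne with hw
  have hwW : w ∈ W := W.max'_mem hWne
  have haw : a < w := by have := Finset.mem_filter.1 hwW; tauto
  have hwb : w < b := by have := Finset.mem_filter.1 hwW; tauto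
  have hadjaw : T.graph.Adj a w := by have := Finset.mem_filter.1 hwW; tauto
  have maxW : ∀ c, a < c → c < b → T.graph.Adj a c → c ≤ w := by
    intro c h1 h2 h3
    exact W.le_max' c (by simp [hW, h1, h2, h3])
  -- workhorse 2
  have W2 : ∀ c d : Fin n, T.graph.Adj c d → w < c → c < b → (d < w ∨ b < d) → False := by
    intro c d hcd h1 h2 h3
    rcases h3 with h3 | h3
    · rcases lt_trichotomy d a with h4 | h4 | h4
      · exact T.noncross a b d c hadjab hcd.symm (Or.inr ⟨h4, lt_trans haw h1, h2⟩)
      · rw [h4] at hcd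
        exact absurd (maxW c (lt_trans haw h1) h2 hcd.symm) (not_le.2 h1)
      · exact T.noncross a w d c hadjaw hcd.symm (Or.inl ⟨h4, h3, h1⟩)
    · exact T.noncross a b c d hadjab hcd (Or.inl ⟨lt_trans haw h1, h2, h3⟩)
  have hadjwb : T.graph.Adj w b := by
    apply saturated hn T w b (Fin.ne_of_lt hwb)
    intro c d hcd
    refine ⟨?_, ?_, ?_, ?_⟩
    · rintro (⟨h1, h2, h3⟩ | ⟨h1, h2, h3⟩)
      · exact W2 c d hcd h1 h2 (Or.inr h3)
      · exact W2 d c hcd.symm h2 h3 (Or.inl h1)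
    · rintro (⟨h1, h2, h3⟩ | ⟨h1, h2, h3⟩) <;>
        (simp only [Fin.lt_def] at *; omega)
    · rintro (⟨h1, h2, h3⟩ | ⟨h1, h2, h3⟩)
      · exact W2 d c hcd.symm h2 h3 (Or.inl h1)
      · exact W2 c d hcd h1 h2 (Or.inr h3)
    · rintro (⟨h1, h2, h3⟩ | ⟨h1, h2, h3⟩) <;>
        (simp only [Fin.lt_def] at *; omega)
  have hna0w : ¬T.graph.Adj 0 w := gap w haw hwb
  have h0w : (0 : Fin n) ≠ w := fun h => by
    rw [← h] at haw; exact absurd (lt_trans ha0 haw) (lt_irrefl 0)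
  -- workhorse 3: the only edge crossing the chord 0w is ab
  have W3 : ∀ c d : Fin n, T.graph.Adj c d → s(c, d) ≠ s(a, b) →
      0 < c → c < w → w < d → False := by
    intro c d hcd hne h0c hcw hwd
    rcases lt_trichotomy c a with h4 | h4 | h4
    · exact T.noncross 0 a c d hadj0a hcd (Or.inl ⟨h0c, h4, lt_trans haw hwd⟩)
    · rcases lt_trichotomy d b with h5 | h5 | h5
      · have had : T.graph.Adj a d := by rw [← h4]; exact hcd
        have had2 : a < d := by rw [← h4]; exact lt_trans hcw hwd
        exact absurd (maxW d had2 h5 had) (not_le.2 hwd)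
      · exact hne (by rw [h4, h5])
      · exact T.noncross 0 b c d hadj0b hcd
          (Or.inl ⟨h0c, by rw [h4]; exact hab, h5⟩)
    · exact T.noncross a w c d hadjaw hcd (Or.inl ⟨h4, hcw, hwd⟩)
  -- the flipped graph
  set G' : SimpleGraph (Fin n) :=
    SimpleGraph.fromEdgeSet ((T.graph.edgeSet \ {s(a, b)}) ∪ {s(0, w)}) with hG'
  have hG'adj : ∀ x y : Fin n, G'.Adj x y ↔
      ((T.graph.Adj x y ∧ s(x, y) ≠ s(a, b)) ∨ s(x, y) = s(0, w)) ∧ x ≠ y := by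
    intro x y
    rw [hG', SimpleGraph.fromEdgeSet_adj]
    simp only [Set.mem_union, Set.mem_diff, Set.mem_singleton_iff, SimpleGraph.mem_edgeSet]
  have hbd_ne : ∀ i : Fin n, s(i, i + 1) ≠ s(a, b) := by
    intro i h
    rw [Sym2.eq_iff] at h
    have hv := hvalsucc i
    have hbv := b.2
    have hav := a.2
    have hia := Fin.lt_def.1 hab
    have h0a := Fin.lt_def.1 ha0
    simp only [Fin.val_zero] at h0a
    rcases h with ⟨h1, h2⟩ | ⟨h1, h2⟩
    · have hbe : b.val = (i.val + 1) % n := by rw [← h2, hv]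
      have h1v : i.val = a.val := by rw [h1]
      have hmod : (i.val + 1) % n = i.val + 1 := Nat.mod_eq_of_lt (by omega)
      omega
    · have hae : a.val = (i.val + 1) % n := by rw [← h2, hv]
      have h1v : i.val = b.val := by rw [h1]
      rcases Nat.lt_or_ge (i.val + 1) n with hlt | hge
      · have := Nat.mod_eq_of_lt hlt; omega
      · have hin : i.val + 1 = n := by have := i.2; omega
        have : (i.val + 1) % n = 0 := by rw [hin]; exact Nat.mod_self n
        omega
  -- T' is maximal outerplanar
  have hbdry : ∀ i : Fin n, G'.Adj i (i + 1) := by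
    intro i
    rw [hG'adj]
    refine ⟨Or.inl ⟨T.boundary i, hbd_ne i⟩, ?_⟩
    intro h
    have hv := hvalsucc i
    have h2 : i.val = (i.val + 1) % n := by rw [← hv, ← h]
    have hi2 := i.2
    rcases Nat.lt_or_ge (i.val + 1) n with hlt | hge
    · have := Nat.mod_eq_of_lt hlt; omega
    · have hin : i.val + 1 = n := by omega
      have : (i.val + 1) % n = 0 := by rw [hin]; exact Nat.mod_self n
      omega
  have hnc' : ∀ x y z t : Fin n, G'.Adj x y → G'.Adj z t → ¬Crossing x y z t := by
    intro x y z t hxy hzt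
    rw [hG'adj] at hxy hzt
    obtain ⟨hxy1, hxyne⟩ := hxy
    obtain ⟨hzt1, hztne⟩ := hzt
    intro hcr
    rcases hxy1 with ⟨hxyE, hxyab⟩ | hxynew <;> rcases hzt1 with ⟨hztE, hztab⟩ | hztnew
    · exact T.noncross x y z t hxyE hztE hcr
    · rw [Sym2.eq_iff] at hztnew
      rcases hztnew with ⟨rfl, rfl⟩ | ⟨rfl, rfl⟩ <;>
        rcases hcr with ⟨h1, h2, h3⟩ | ⟨h1, h2, h3⟩ <;>
        first
          | exact W3 x y hxyE hxyab h1 h2 h3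
          | (simp only [Fin.lt_def, Fin.val_zero] at h1 h2 h3; omega)
    · rw [Sym2.eq_iff] at hxynew
      rcases hxynew with ⟨rfl, rfl⟩ | ⟨rfl, rfl⟩ <;>
        rcases hcr with ⟨h1, h2, h3⟩ | ⟨h1, h2, h3⟩ <;>
        first
          | exact W3 z t hztE hztab h1 h2 h3
          | (simp only [Fin.lt_def, Fin.val_zero] at h1 h2 h3; omega)
    · rw [Sym2.eq_iff] at hxynew hztnew
      rcases hxynew with ⟨rfl, rfl⟩ | ⟨rfl, rfl⟩ <;>
        rcases hztnew with ⟨h1', h2'⟩ | ⟨h1', h2'⟩ <;>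
        rcases hcr with ⟨h1, h2, h3⟩ | ⟨h1, h2, h3⟩ <;>
        (subst h1'; subst h2';
          simp only [Fin.lt_def, Fin.val_zero] at h1 h2 h3; omega)
  have hedge' : G'.edgeSet = (T.graph.edgeSet \ {s(a, b)}) ∪ {s(0, w)} := by
    rw [hG', SimpleGraph.edgeSet_fromEdgeSet]
    ext e
    simp only [Set.mem_diff, Set.mem_union, Set.mem_singleton_iff, Set.mem_setOf_eq]
    constructor
    · tauto
    · intro he
      refine ⟨he, ?_⟩
      rcases he with ⟨he, _⟩ | rfl
      · exact SimpleGraph.not_isDiag_of_mem_edgeSet _ he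
      · simp [Sym2.isDiag_iff_proj_eq, h0w]
  have hcount' : G'.edgeSet.ncard = 2 * n - 3 := by
    rw [hedge', Set.union_singleton]
    have hnm : s(0, w) ∉ T.graph.edgeSet \ {s(a, b)} :=
      fun hmem => hna0w (T.graph.mem_edgeSet.1 hmem.1)
    rw [Set.ncard_insert_of_notMem hnm ((T.graph.edgeSet.toFinite).diff)]
    rw [Set.ncard_diff_singleton_of_mem (T.graph.mem_edgeSet.2 hadjab)]
    rw [T.maximal]
    omega
  refine ⟨⟨G', hbdry, hnc', hcount'⟩, ⟨a, b, 0, w, hadjab, hadj0a.symm, hadj0b.symm,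
    hadjaw, hadjwb.symm, h0w, hna0w, hG'⟩, ?_⟩
  -- degree increases by one
  have hNset : G'.neighborSet 0 = insert w (T.graph.neighborSet 0) := by
    ext c
    simp only [SimpleGraph.mem_neighborSet, Set.mem_insert_iff]
    rw [hG'adj]
    constructor
    · rintro ⟨⟨h1, _⟩ | h1, hne⟩
      · exact Or.inr h1
      · rw [Sym2.eq_iff] at h1
        rcases h1 with ⟨_, rfl⟩ | ⟨h1, _⟩
        · exact Or.inl rfl
        · exact absurd h1 h0w
    · rintro (rfl | h1)
      · exact ⟨Or.inr rfl, h0w⟩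
      · refine ⟨Or.inl ⟨h1, ?_⟩, h1.ne⟩
        intro he
        rw [Sym2.eq_iff] at he
        rcases he with ⟨h2, _⟩ | ⟨h2, _⟩
        · exact (fin_pos_iff_ne_zero' a).1 ha0 h2.symm
        · exact (fin_pos_iff_ne_zero' b).1 (lt_trans ha0 hab) h2.symm
  simp only [deg, hNset]
  rw [Set.ncard_insert_of_notMem (by simpa using hna0w) (Set.toFinite _)]

lemma flip_deg_le {n : ℕ} [NeZero n] (v : Fin n) {G G' : SimpleGraph (Fin n)}
    (h : IsFlipG G G') : deg G' v ≤ deg G v + 1 := by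
  classical
  obtain ⟨x, y, z, w, hxy, hxz, hyz, hxw, hyw, hzw, hnzw, rfl⟩ := h
  set G2 := SimpleGraph.fromEdgeSet ((G.edgeSet \ {s(x, y)}) ∪ {s(z, w)}) with hG2
  have key : ∀ u, G2.Adj v u → G.Adj v u ∨ (v = z ∧ u = w) ∨ (v = w ∧ u = z) := by
    intro u hu
    rw [hG2, SimpleGraph.fromEdgeSet_adj] at hu
    obtain ⟨hm, hne⟩ := hu
    rcases hm with ⟨hm, _⟩ | hm
    · exact Or.inl (G.mem_edgeSet.1 hm)
    · rw [Set.mem_singleton_iff, Sym2.eq_iff] at hm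
      tauto
  by_cases hvz : v = z
  · have hsub : G2.neighborSet v ⊆ insert w (G.neighborSet v) := by
      intro u hu
      rcases key u hu with h | ⟨_, rfl⟩ | ⟨hvw, rfl⟩
      · exact Set.mem_insert_of_mem _ h
      · exact Set.mem_insert _ _
      · exact absurd (hvz.symm.trans hvw) hzw
    calc deg G2 v ≤ (insert w (G.neighborSet v)).ncard :=
            Set.ncard_le_ncard hsub (Set.toFinite _)
      _ ≤ deg G v + 1 := Set.ncard_insert_le _ _
  · by_cases hvw : v = w
    · have hsub : G2.neighborSet v ⊆ insert z (G.neighborSet v) := by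
        intro u hu
        rcases key u hu with h | ⟨hvz', rfl⟩ | ⟨_, rfl⟩
        · exact Set.mem_insert_of_mem _ h
        · exact absurd hvz' hvz
        · exact Set.mem_insert _ _
      calc deg G2 v ≤ (insert z (G.neighborSet v)).ncard :=
              Set.ncard_le_ncard hsub (Set.toFinite _)
        _ ≤ deg G v + 1 := Set.ncard_insert_le _ _
    · have hsub : G2.neighborSet v ⊆ G.neighborSet v := by
        intro u hu
        rcases key u hu with h | ⟨hvz', _⟩ | ⟨hvw', _⟩
        · exact h
        · exact absurd hvz' hvz
        · exact absurd hvw' hvw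
      have h := Set.ncard_le_ncard hsub (Set.toFinite _)
      simp only [deg]
      omega

lemma reach_deg {n : ℕ} [NeZero n] (v : Fin n) :
    ∀ (L : List (SimpleGraph (Fin n))) (G : SimpleGraph (Fin n)),
      List.Chain IsFlipG G L → deg (L.getLastD G) v ≤ deg G v + L.length := by
  intro L
  induction L with
  | nil => intro G _; simp
  | cons H t ih =>
    intro G hch
    unfold List.Chain at hch
    rw [List.chain_cons] at hch
    have h1 := flip_deg_le v hch.1
    have h2 := ih H hch.2
    rw [List.getLastD_cons]
    simp only [List.length_cons]
    omega

/-- Existence, for the vertex 0. -/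
lemma exists_flips0 {n : ℕ} [NeZero n] (hn : 3 ≤ n) :
    ∀ (m : ℕ) (T : MaxOuterplanar n), m = n - 1 - deg T.graph 0 →
      ∃ G', ReachableG T.graph G' m ∧ Dominant G' 0 := by
  intro m
  induction m with
  | zero =>
    intro T hm
    refine ⟨T.graph, ⟨[], rfl, List.Chain.nil, rfl⟩, ?_⟩
    exact dominant_of_deg _ _ (by omega)
  | succ m ih =>
    intro T hm
    have hdeg : deg T.graph 0 < n - 1 := by omega
    obtain ⟨T', hflip, hdeg'⟩ := flip_step hn T hdeg
    obtain ⟨G', ⟨L, hlen, hch, hlast⟩, hdom⟩ := ih T' (by omega)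
    exact ⟨G', ⟨T'.graph :: L, by simp [hlen], List.chain_cons.2 ⟨hflip, hch⟩,
      by rw [List.getLastD_cons]; exact hlast⟩, hdom⟩

/-! ### Rotation machinery -/

def CrSym {n : ℕ} (a b c d : Fin n) : Prop :=
  Crossing a b c d ∨ Crossing a b d c ∨ Crossing b a c d ∨ Crossing b a d c

lemma crSym_swap1 {n : ℕ} {a b c d : Fin n} (h : CrSym a b c d) : CrSym b a c d := by
  unfold CrSym at *; tauto

lemma crSym_swap2 {n : ℕ} {a b c d : Fin n} (h : CrSym a b c d) : CrSym a b d c := by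
  unfold CrSym at *; tauto

lemma crossing_pairs {n : ℕ} {a b c d : Fin n} (h : Crossing a b c d) : Crossing c d a b :=
  Or.symm h

lemma crSym_pairs {n : ℕ} {a b c d : Fin n} (h : CrSym a b c d) : CrSym c d a b := by
  rcases h with h | h | h | h
  · exact Or.inl (Or.symm h)
  · exact Or.inr (Or.inr (Or.inl (Or.symm h)))
  · exact Or.inr (Or.inl (Or.symm h))
  · exact Or.inr (Or.inr (Or.inr (Or.symm h)))

lemma fin_val_succ_lt {n : ℕ} [NeZero n] (hn : 3 ≤ n) (x : Fin n) (h : x.val + 1 < n) :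
    (x + 1).val = x.val + 1 := by
  rw [Fin.val_add, Fin.val_one']
  rw [Nat.mod_eq_of_lt (show (1 : ℕ) < n by omega)]
  exact Nat.mod_eq_of_lt h

lemma fin_val_succ_last {n : ℕ} [NeZero n] (hn : 3 ≤ n) (x : Fin n) (h : x.val = n - 1) :
    (x + 1).val = 0 := by
  rw [Fin.val_add, Fin.val_one']
  rw [Nat.mod_eq_of_lt (show (1 : ℕ) < n by omega), h,
    Nat.sub_add_cancel (by omega)]
  exact Nat.mod_self n

lemma stepCr {n : ℕ} [NeZero n] (hn : 3 ≤ n) {p q r s : Fin n} (h : Crossing p q r s) :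
    CrSym (p + 1) (q + 1) (r + 1) (s + 1) := by
  have hp := p.2; have hq := q.2; have hr := r.2; have hs := s.2
  rcases h with ⟨h1, h2, h3⟩ | ⟨h1, h2, h3⟩ <;>
    simp only [Fin.lt_def] at h1 h2 h3
  · by_cases hcase : s.val = n - 1
    · have ep := fin_val_succ_lt hn p (by omega)
      have eq' := fin_val_succ_lt hn q (by omega)
      have er := fin_val_succ_lt hn r (by omega)
      have es := fin_val_succ_last hn s hcase
      exact Or.inr (Or.inl (Or.inr ⟨Fin.lt_def.2 (by omega), Fin.lt_def.2 (by omega),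
        Fin.lt_def.2 (by omega)⟩))
    · have ep := fin_val_succ_lt hn p (by omega)
      have eq' := fin_val_succ_lt hn q (by omega)
      have er := fin_val_succ_lt hn r (by omega)
      have es := fin_val_succ_lt hn s (by omega)
      exact Or.inl (Or.inl ⟨Fin.lt_def.2 (by omega), Fin.lt_def.2 (by omega),
        Fin.lt_def.2 (by omega)⟩)
  · by_cases hcase : q.val = n - 1
    · have ep := fin_val_succ_lt hn p (by omega)
      have eq' := fin_val_succ_last hn q hcase
      have er := fin_val_succ_lt hn r (by omega)
      have es := fin_val_succ_lt hn s (by omega)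
      exact Or.inr (Or.inr (Or.inl (Or.inl ⟨Fin.lt_def.2 (by omega), Fin.lt_def.2 (by omega),
        Fin.lt_def.2 (by omega)⟩)))
    · have ep := fin_val_succ_lt hn p (by omega)
      have eq' := fin_val_succ_lt hn q (by omega)
      have er := fin_val_succ_lt hn r (by omega)
      have es := fin_val_succ_lt hn s (by omega)
      exact Or.inl (Or.inr ⟨Fin.lt_def.2 (by omega), Fin.lt_def.2 (by omega),
        Fin.lt_def.2 (by omega)⟩)

lemma stepCrSym {n : ℕ} [NeZero n] (hn : 3 ≤ n) {p q r s : Fin n} (h : CrSym p q r s) :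
    CrSym (p + 1) (q + 1) (r + 1) (s + 1) := by
  rcases h with h | h | h | h
  · exact stepCr hn h
  · exact crSym_swap2 (stepCr hn h)
  · exact crSym_swap1 (stepCr hn h)
  · exact crSym_swap1 (crSym_swap2 (stepCr hn h))

open Fin.NatCast in
lemma cr_rot {n : ℕ} [NeZero n] (hn : 3 ≤ n) :
    ∀ (j : ℕ) (a b c d : Fin n), Crossing a b c d →
      CrSym (a + (j : Fin n)) (b + (j : Fin n)) (c + (j : Fin n)) (d + (j : Fin n)) := by
  intro j
  induction j with
  | zero => intro a b c d h; simpa [CrSym] using Or.inl h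
  | succ j ih =>
    intro a b c d h
    have := stepCrSym hn (ih a b c d h)
    have hcast : ((j + 1 : ℕ) : Fin n) = (j : Fin n) + 1 := by push_cast; ring
    rw [hcast]
    simpa [← add_assoc] using this

lemma isFlipG_comap {V W : Type*} (e : V ≃ W) {G G' : SimpleGraph W}
    (h : IsFlipG G G') : IsFlipG (G.comap ⇑e) (G'.comap ⇑e) := by
  obtain ⟨x, y, z, w, h1, h2, h3, h4, h5, h6, h7, heq⟩ := h
  refine ⟨e.symm x, e.symm y, e.symm z, e.symm w, ?_, ?_, ?_, ?_, ?_,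
    fun hc => h6 (e.symm.injective hc), ?_, ?_⟩
  · simp only [SimpleGraph.comap_adj, Equiv.apply_symm_apply]; exact h1
  · simp only [SimpleGraph.comap_adj, Equiv.apply_symm_apply]; exact h2
  · simp only [SimpleGraph.comap_adj, Equiv.apply_symm_apply]; exact h3
  · simp only [SimpleGraph.comap_adj, Equiv.apply_symm_apply]; exact h4
  · simp only [SimpleGraph.comap_adj, Equiv.apply_symm_apply]; exact h5
  · simp only [SimpleGraph.comap_adj, Equiv.apply_symm_apply]; exact h7
  · subst heq
    have k1 : ∀ u u' : V, s(u, u') = s(e.symm x, e.symm y) ↔ s(e u, e u') = s(x, y) := by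
      intro u u'
      rw [Sym2.eq_iff, Sym2.eq_iff]
      constructor
      · rintro (⟨rfl, rfl⟩ | ⟨rfl, rfl⟩) <;> simp
      · rintro (⟨hh1, hh2⟩ | ⟨hh1, hh2⟩)
        · exact Or.inl ⟨by rw [← hh1]; simp, by rw [← hh2]; simp⟩
        · exact Or.inr ⟨by rw [← hh1]; simp, by rw [← hh2]; simp⟩
    have k2 : ∀ u u' : V, s(u, u') = s(e.symm z, e.symm w) ↔ s(e u, e u') = s(z, w) := by
      intro u u'
      rw [Sym2.eq_iff, Sym2.eq_iff]
      constructor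
      · rintro (⟨rfl, rfl⟩ | ⟨rfl, rfl⟩) <;> simp
      · rintro (⟨hh1, hh2⟩ | ⟨hh1, hh2⟩)
        · exact Or.inl ⟨by rw [← hh1]; simp, by rw [← hh2]; simp⟩
        · exact Or.inr ⟨by rw [← hh1]; simp, by rw [← hh2]; simp⟩
    ext u u'
    simp only [SimpleGraph.comap_adj, SimpleGraph.fromEdgeSet_adj, Set.mem_union,
      Set.mem_diff, Set.mem_singleton_iff, SimpleGraph.mem_edgeSet, ne_eq,
      EmbeddingLike.apply_eq_iff_eq, k1 u u', k2 u u']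

lemma getLastD_map {α β : Type*} (f : α → β) :
    ∀ (L : List α) (g : α), (L.map f).getLastD (f g) = f (L.getLastD g)
  | [], _ => rfl
  | (a :: t), g => by
    rw [List.map_cons, List.getLastD_cons, List.getLastD_cons]
    exact getLastD_map f t a

lemma chain_comap {V W : Type*} (e : V ≃ W) :
    ∀ (L : List (SimpleGraph W)) (G : SimpleGraph W), List.Chain IsFlipG G L →
      List.Chain IsFlipG (G.comap ⇑e) (L.map (fun X => X.comap ⇑e))
  | [], _, _ => List.Chain.nil
  | (H :: t), G, h => by
    unfold List.Chain at h ⊢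
    rw [List.chain_cons] at h
    rw [List.map_cons, List.chain_cons]
    exact ⟨isFlipG_comap e h.1, chain_comap e t H h.2⟩

theorem maxOuterplanar_dominant_flips' (n : ℕ) [NeZero n] (hn : 3 ≤ n)
    (T : MaxOuterplanar n) (v : Fin n) :
    (∃ G' : SimpleGraph (Fin n),
        ReachableG T.graph G' (n - 1 - deg T.graph v) ∧ Dominant G' v) ∧
    (∀ (k : ℕ) (G' : SimpleGraph (Fin n)),
        ReachableG T.graph G' k → Dominant G' v → n - 1 - deg T.graph v ≤ k) := by
  classical
  constructor
  · -- sufficiency, by rotating v to 0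
    set ε : Fin n ≃ Fin n := Equiv.addRight v with hε
    have hcoe : ∀ x : Fin n, ε x = x + v := fun x => rfl
    have hback : (T.graph.comap ⇑ε).comap ⇑ε.symm = T.graph := by
      ext a b
      simp only [SimpleGraph.comap_adj, Equiv.apply_symm_apply]
    have hbT : ∀ i : Fin n, (T.graph.comap ⇑ε).Adj i (i + 1) := by
      intro i
      simp only [SimpleGraph.comap_adj, hcoe]
      rw [add_right_comm]
      exact T.boundary (i + v)
    have hncT : ∀ a b c d : Fin n, (T.graph.comap ⇑ε).Adj a b →
        (T.graph.comap ⇑ε).Adj c d → ¬Crossing a b c d := by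
      intro a b c d h1 h2 hcr
      simp only [SimpleGraph.comap_adj, hcoe] at h1 h2
      have hrot := cr_rot hn v.val a b c d hcr
      rw [Fin.cast_val_eq_self] at hrot
      rcases hrot with h | h | h | h
      · exact T.noncross _ _ _ _ h1 h2 h
      · exact T.noncross _ _ _ _ h1 h2.symm h
      · exact T.noncross _ _ _ _ h1.symm h2 h
      · exact T.noncross _ _ _ _ h1.symm h2.symm h
    have himg : Sym2.map (⇑ε) '' (T.graph.comap ⇑ε).edgeSet = T.graph.edgeSet := by
      ext eedge
      constructor
      · rintro ⟨e', he', rfl⟩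
        induction e' using Sym2.ind with
        | _ p q =>
          rw [Sym2.map_pair_eq, SimpleGraph.mem_edgeSet]
          rw [SimpleGraph.mem_edgeSet, SimpleGraph.comap_adj] at he'
          exact he'
      · intro he
        induction eedge using Sym2.ind with
        | _ p q =>
          rw [SimpleGraph.mem_edgeSet] at he
          refine ⟨s(ε.symm p, ε.symm q), ?_, ?_⟩
          · rw [SimpleGraph.mem_edgeSet, SimpleGraph.comap_adj]
            simp only [Equiv.apply_symm_apply]
            exact he
          · rw [Sym2.map_pair_eq]
            simp only [Equiv.apply_symm_apply]
    have hmaxT : (T.graph.comap ⇑ε).edgeSet.ncard = 2 * n - 3 := by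
      rw [← T.maximal, ← himg,
        Set.ncard_image_of_injective _ (Sym2.map.injective ε.injective)]
    set Trot : MaxOuterplanar n := ⟨T.graph.comap ⇑ε, hbT, hncT, hmaxT⟩ with hTrot
    have hdegT : deg Trot.graph 0 = deg T.graph v := by
      have himgN : (⇑ε) '' (Trot.graph.neighborSet 0) = T.graph.neighborSet v := by
        ext u
        constructor
        · rintro ⟨c, hc, rfl⟩
          have : T.graph.Adj (0 + v) (c + v) := hc
          rwa [zero_add] at this
        · intro hu
          refine ⟨ε.symm u, ?_, Equiv.apply_symm_apply _ _⟩
          show T.graph.Adj (ε 0) (ε (ε.symm u))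
          rw [Equiv.apply_symm_apply, hcoe, zero_add]
          exact hu
      rw [deg, deg, ← himgN, Set.ncard_image_of_injective _ ε.injective]
    obtain ⟨H', ⟨L, hlen, hch, hlast⟩, hdom⟩ :=
      exists_flips0 hn (n - 1 - deg T.graph v) Trot (by rw [hdegT])
    refine ⟨H'.comap ⇑ε.symm, ⟨L.map (fun X => X.comap ⇑ε.symm), by simp [hlen], ?_, ?_⟩, ?_⟩
    · have := chain_comap ε.symm L Trot.graph hch
      rwa [show Trot.graph.comap ⇑ε.symm = T.graph from hback] at this
    · have h1 := getLastD_map (fun X => X.comap ⇑ε.symm) L Trot.graph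
      rw [hlast] at h1
      rw [show (T.graph : SimpleGraph (Fin n)) = Trot.graph.comap ⇑ε.symm from hback.symm]
      exact h1
    · intro u hu
      show H'.Adj (ε.symm v) (ε.symm u)
      have h0 : ε.symm v = 0 := by
        apply ε.injective
        rw [Equiv.apply_symm_apply, hcoe, zero_add]
      rw [h0]
      apply hdom
      intro hc
      apply hu
      have := congrArg ε hc
      rw [Equiv.apply_symm_apply, hcoe, zero_add] at this
      exact this
  · -- necessity
    intro k G' hreach hdom
    obtain ⟨L, hlen, hch, hlast⟩ := hreach
    have h1 := reach_deg v L T.graph hch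
    rw [hlast] at h1
    have h2 := deg_dominant G' v hdom
    omega

/-- In any maximal outerplanar graph on `n ≥ 3` vertices, for any vertex `v`,
exactly `n - 1 - deg v` edge flips are necessary and sufficient to make `v`
dominant. -/
theorem maxOuterplanar_dominant_flips (n : ℕ) [NeZero n] (hn : 3 ≤ n)
    (T : MaxOuterplanar n) (v : Fin n) :
    (∃ G' : SimpleGraph (Fin n),
        ReachableG T.graph G' (n - 1 - deg T.graph v) ∧ Dominant G' v) ∧
    (∀ (k : ℕ) (G' : SimpleGraph (Fin n)),
        ReachableG T.graph G' k → Dominant G' v → n - 1 - deg T.graph v ≤ k) :=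
  maxOuterplanar_dominant_flips' n hn T v
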